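/- arXiv:2510.27491 — 2 statements merged into one kernel-verified Lean document; each statement's English description precedes it below -/
import Mathlib

section
/- Let u and v be two points in the Poincaré ball B^D, and let θ = π − ∠uOv, where O is the origin. If θ < 1, then d_H(u,O) + d_H(O,v) ≤ d_H(u,v) + θ². -/
noncomputable def arcosh (x : ℝ) : ℝ := Real.log (x + Real.sqrt (x ^ 2 - 1))

/-- Hyperbolic distance in the Poincaré ball model. -/
noncomputable def dH {D : ℕ} (u v : EuclideanSpace ℝ (Fin D)) : ℝ :=
  arcosh (1 + 2 * ‖u - v‖ ^ 2 / ((1 - ‖u‖ ^ 2) * (1 - ‖v‖ ^ 2)))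

lemma arcosh_nonneg {x : ℝ} (hx : 1 ≤ x) : 0 ≤ arcosh x := by
  unfold arcosh
  apply Real.log_nonneg
  nlinarith [Real.sqrt_nonneg (x ^ 2 - 1)]

lemma sqrt_sq_sub_one {x : ℝ} (hx : 1 ≤ x) :
    Real.sqrt (x ^ 2 - 1) ^ 2 = x ^ 2 - 1 :=
  Real.sq_sqrt (by nlinarith)

lemma cosh_arcosh {x : ℝ} (hx : 1 ≤ x) : Real.cosh (arcosh x) = x := by
  have hs : Real.sqrt (x ^ 2 - 1) ^ 2 = x ^ 2 - 1 := sqrt_sq_sub_one hx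
  have hs0 : 0 ≤ Real.sqrt (x ^ 2 - 1) := Real.sqrt_nonneg _
  have hy : (0:ℝ) < x + Real.sqrt (x ^ 2 - 1) := by nlinarith
  unfold arcosh
  rw [Real.cosh_eq, Real.exp_log hy, Real.exp_neg, Real.exp_log hy,
    div_eq_iff (by norm_num : (2:ℝ) ≠ 0)]
  field_simp
  nlinarith

lemma sinh_arcosh {x : ℝ} (hx : 1 ≤ x) :
    Real.sinh (arcosh x) = Real.sqrt (x ^ 2 - 1) := by
  have hs : Real.sqrt (x ^ 2 - 1) ^ 2 = x ^ 2 - 1 := sqrt_sq_sub_one hx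
  have hs0 : 0 ≤ Real.sqrt (x ^ 2 - 1) := Real.sqrt_nonneg _
  have hy : (0:ℝ) < x + Real.sqrt (x ^ 2 - 1) := by nlinarith
  unfold arcosh
  rw [Real.sinh_eq, Real.exp_log hy, Real.exp_neg, Real.exp_log hy,
    div_eq_iff (by norm_num : (2:ℝ) ≠ 0)]
  field_simp
  nlinarith

lemma arcosh_mono {x y : ℝ} (hx : 1 ≤ x) (hxy : x ≤ y) :
    arcosh x ≤ arcosh y := by
  unfold arcosh
  have h1 : (0:ℝ) < x + Real.sqrt (x ^ 2 - 1) := by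
    nlinarith [Real.sqrt_nonneg (x ^ 2 - 1)]
  apply Real.log_le_log h1
  have : Real.sqrt (x ^ 2 - 1) ≤ Real.sqrt (y ^ 2 - 1) :=
    Real.sqrt_le_sqrt (by nlinarith)
  linarith

lemma arcosh_cosh {y : ℝ} (hy : 0 ≤ y) : arcosh (Real.cosh y) = y := by
  have hs : Real.cosh y ^ 2 - 1 = Real.sinh y ^ 2 := by
    have := Real.cosh_sq y; linarith
  have hsn : 0 ≤ Real.sinh y := Real.sinh_nonneg_iff.2 hy
  unfold arcosh
  rw [hs, Real.sqrt_sq hsn, Real.cosh_add_sinh, Real.log_exp]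

/-- Key real inequality: for `0 ≤ t ≤ 1` and `t ≤ S`,
`cosh S - cosh (S - t) ≥ (cosh S - 1) * t / 4`. -/
lemma key_ineq {S t : ℝ} (ht0 : 0 ≤ t) (ht1 : t ≤ 1) (hS : t ≤ S) :
    (Real.cosh S - 1) * t / 4 ≤ Real.cosh S - Real.cosh (S - t) := by
  have hS0 : 0 ≤ S := le_trans ht0 hS
  set p := (S - t) / 2 with hp
  set q := t / 2 with hq
  have hp0 : 0 ≤ p := by rw [hp]; linarith
  have hq0 : 0 ≤ q := by rw [hq]; linarith
  have hSq : S = (p + q) + (p + q) := by rw [hp, hq]; ring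
  have ht2 : t = 2 * q := by rw [hq]; ring
  have hcoshS : Real.cosh S = 2 * Real.sinh (p + q) ^ 2 + 1 := by
    rw [hSq, Real.cosh_add]
    nlinarith [Real.cosh_sq (p + q)]
  have hdiff : Real.cosh S - Real.cosh (S - t)
      = 2 * Real.sinh (p + p + q) * Real.sinh q := by
    rw [show S - t = (p + p + q) - q from by rw [hp, hq]; ring,
      show S = (p + p + q) + q from by rw [hp, hq]; ring,
      Real.cosh_add, Real.cosh_sub]
    ring
  have hsq : q ≤ Real.sinh q := Real.self_le_sinh_iff.2 hq0
  have hsinhp : 0 ≤ Real.sinh p := Real.sinh_nonneg_iff.2 hp0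
  have hsinhq : 0 ≤ Real.sinh q := Real.sinh_nonneg_iff.2 hq0
  have hcoshp : (1:ℝ) ≤ Real.cosh p := Real.one_le_cosh p
  have hcoshq : (1:ℝ) ≤ Real.cosh q := Real.one_le_cosh q
  have hslc : Real.sinh p ≤ Real.cosh p := le_of_lt (Real.sinh_lt_cosh p)
  have hexpq : Real.cosh q + Real.sinh q ≤ 2 := by
    have h1 : Real.cosh q + Real.sinh q = Real.exp q := Real.cosh_add_sinh q
    have h2 : Real.exp q ≤ Real.exp (1/2) := Real.exp_le_exp.2 (by rw [hq]; linarith)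
    have h3 : Real.exp (1/2 : ℝ) < 2 := by
      have he : Real.exp (1/2 : ℝ) * Real.exp (1/2 : ℝ) = Real.exp 1 := by
        rw [← Real.exp_add]; norm_num
      nlinarith [Real.exp_one_lt_d9, Real.exp_pos (1/2 : ℝ)]
    linarith
  have hspq : 0 ≤ Real.sinh (p + q) := Real.sinh_nonneg_iff.2 (by linarith)
  have h1 : Real.sinh (p + q) ≤ 2 * Real.cosh p := by
    rw [Real.sinh_add]
    nlinarith [mul_le_mul_of_nonneg_right hexpq (by linarith : (0:ℝ) ≤ Real.cosh p),
      mul_le_mul_of_nonneg_right hslc (by linarith : (0:ℝ) ≤ Real.cosh q)]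
  have h2 : Real.sinh (p + q) * Real.cosh p ≤ Real.sinh (p + p + q) := by
    rw [show p + p + q = (p + q) + p from by ring]
    nlinarith [Real.sinh_add (p + q) p, Real.one_le_cosh (p + q)]
  have hsppq : 0 ≤ Real.sinh (p + p + q) := Real.sinh_nonneg_iff.2 (by linarith)
  have step : Real.sinh (p + q) ^ 2 * q ≤ 2 * Real.sinh (p + p + q) * Real.sinh q := by
    have A : Real.sinh (p + q) ^ 2 * q ≤ (2 * Real.cosh p * Real.sinh (p + q)) * q := by
      nlinarith [mul_le_mul_of_nonneg_right
        (mul_le_mul_of_nonneg_right h1 hspq) hq0]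
    have B : (2 * Real.cosh p * Real.sinh (p + q)) * q
        ≤ (2 * Real.sinh (p + p + q)) * q := by
      nlinarith [mul_le_mul_of_nonneg_right h2 hq0]
    have C : (2 * Real.sinh (p + p + q)) * q
        ≤ 2 * Real.sinh (p + p + q) * Real.sinh q := by nlinarith
    linarith
  have e4 : (Real.cosh S - 1) * t / 4 = Real.sinh (p + q) ^ 2 * q := by
    rw [hcoshS, ht2]; ring
  linarith [step, hdiff, e4]

set_option maxHeartbeats 1000000 in
theorem triangle_defect_angle_bound {D : ℕ} (u v : EuclideanSpace ℝ (Fin D))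
    (hu : ‖u‖ < 1) (hv : ‖v‖ < 1) (θ : ℝ)
    (hθdef : θ = Real.pi - InnerProductGeometry.angle u v) (hθ : θ < 1) :
    dH u 0 + dH 0 v ≤ dH u v + θ ^ 2 := by
  have ha0 : (0:ℝ) ≤ ‖u‖ := norm_nonneg u
  have hb0 : (0:ℝ) ≤ ‖v‖ := norm_nonneg v
  have hda : (0:ℝ) < 1 - ‖u‖ ^ 2 := by nlinarith
  have hdb : (0:ℝ) < 1 - ‖v‖ ^ 2 := by nlinarith
  -- abbreviations
  set A := (1 + ‖u‖ ^ 2) / (1 - ‖u‖ ^ 2) with hAdef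
  set B := (1 + ‖v‖ ^ 2) / (1 - ‖v‖ ^ 2) with hBdef
  set sA := 2 * ‖u‖ / (1 - ‖u‖ ^ 2) with hsAdef
  set sB := 2 * ‖v‖ / (1 - ‖v‖ ^ 2) with hsBdef
  set X := 1 + 2 * ‖u - v‖ ^ 2 / ((1 - ‖u‖ ^ 2) * (1 - ‖v‖ ^ 2)) with hXdef
  have hA1 : 1 ≤ A := by rw [hAdef, le_div_iff₀ hda]; nlinarith
  have hB1 : 1 ≤ B := by rw [hBdef, le_div_iff₀ hdb]; nlinarith
  have hX1 : 1 ≤ X := by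
    rw [hXdef]
    have : 0 ≤ 2 * ‖u - v‖ ^ 2 / ((1 - ‖u‖ ^ 2) * (1 - ‖v‖ ^ 2)) := by positivity
    linarith
  -- dH in terms of arcosh
  have hdHu : dH u 0 = arcosh A := by
    unfold dH
    rw [sub_zero, norm_zero]
    congr 1
    rw [hAdef]
    field_simp
    ring
  have hdHv : dH 0 v = arcosh B := by
    unfold dH
    rw [zero_sub, norm_neg, norm_zero]
    congr 1
    rw [hBdef]
    field_simp
    ring
  have hdHuv : dH u v = arcosh X := rfl
  -- cosh/sinh of the one-point distances
  have hcoshu : Real.cosh (dH u 0) = A := by rw [hdHu]; exact cosh_arcosh hA1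
  have hcoshv : Real.cosh (dH 0 v) = B := by rw [hdHv]; exact cosh_arcosh hB1
  have hsinhu : Real.sinh (dH u 0) = sA := by
    rw [hdHu, sinh_arcosh hA1, show A ^ 2 - 1 = sA ^ 2 from by
      rw [hAdef, hsAdef]; field_simp; ring]
    exact Real.sqrt_sq (by rw [hsAdef]; positivity)
  have hsinhv : Real.sinh (dH 0 v) = sB := by
    rw [hdHv, sinh_arcosh hB1, show B ^ 2 - 1 = sB ^ 2 from by
      rw [hBdef, hsBdef]; field_simp; ring]
    exact Real.sqrt_sq (by rw [hsBdef]; positivity)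
  set S := dH u 0 + dH 0 v with hSdef
  have hcoshS : Real.cosh S = A * B + sA * sB := by
    rw [hSdef, Real.cosh_add, hcoshu, hcoshv, hsinhu, hsinhv]
  -- angle facts
  have hθ0 : 0 ≤ θ := by
    rw [hθdef]
    linarith [InnerProductGeometry.angle_le_pi u v]
  have hangle : InnerProductGeometry.angle u v = Real.pi - θ := by
    rw [hθdef]; ring
  have hw : Real.cos (InnerProductGeometry.angle u v) * (‖u‖ * ‖v‖)
      = inner ℝ u v := InnerProductGeometry.cos_angle_mul_norm_mul_norm u v
  rw [hangle, Real.cos_pi_sub] at hw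
  have hnuv : ‖u - v‖ ^ 2 = ‖u‖ ^ 2 - 2 * inner ℝ u v + ‖v‖ ^ 2 :=
    norm_sub_sq_real u v
  -- the hyperbolic law of cosines (exact identity)
  have hXeq : X = Real.cosh S - sA * sB * (1 - Real.cos θ) := by
    rw [hcoshS, hXdef, hnuv, ← hw, hAdef, hBdef, hsAdef, hsBdef]
    field_simp
    ring
  -- inequalities
  have hsAsB0 : 0 ≤ sA * sB := by rw [hsAdef, hsBdef]; positivity
  have hsAsBle : 2 * (sA * sB) ≤ Real.cosh S - 1 := by
    have key : A * B - 1 - sA * sB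
        = 2 * (‖u‖ - ‖v‖) ^ 2 / ((1 - ‖u‖ ^ 2) * (1 - ‖v‖ ^ 2)) := by
      rw [hAdef, hBdef, hsAdef, hsBdef]
      field_simp
      ring
    have h0 : 0 ≤ A * B - 1 - sA * sB := by rw [key]; positivity
    rw [hcoshS]; linarith
  have hcosb : 1 - Real.cos θ ≤ θ ^ 2 / 2 := by
    linarith [Real.one_sub_sq_div_two_le_cos (x := θ)]
  have hcos1 : 1 - Real.cos θ ≥ 0 := by linarith [Real.cos_le_one θ]
  have ht1 : θ ^ 2 ≤ 1 := by
    have h := mul_le_mul hθ.le hθ.le hθ0 (by norm_num : (0:ℝ) ≤ 1)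
    calc θ ^ 2 = θ * θ := sq θ
      _ ≤ 1 * 1 := h
      _ = 1 := by norm_num
  have ht0 : 0 ≤ θ ^ 2 := by positivity
  have hSnn : 0 ≤ S := by
    rw [hSdef, hdHu, hdHv]
    linarith [arcosh_nonneg hA1, arcosh_nonneg hB1]
  by_cases hcase : θ ^ 2 ≤ S
  · -- main case
    have hkey := key_ineq ht0 ht1 hcase
    have hprod1 : sA * sB * (1 - Real.cos θ) ≤ sA * sB * (θ ^ 2 / 2) :=
      mul_le_mul_of_nonneg_left hcosb hsAsB0
    have hprod2 : sA * sB * (θ ^ 2 / 2) ≤ (Real.cosh S - 1) / 2 * (θ ^ 2 / 2) := by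
      apply mul_le_mul_of_nonneg_right _ (by positivity)
      linarith
    have hXge : Real.cosh (S - θ ^ 2) ≤ X := by
      rw [hXeq]
      linarith [hkey, hprod1, hprod2]
    have harc : S - θ ^ 2 ≤ arcosh X := by
      calc S - θ ^ 2 = arcosh (Real.cosh (S - θ ^ 2)) :=
            (arcosh_cosh (by linarith)).symm
        _ ≤ arcosh X := arcosh_mono (Real.one_le_cosh _) hXge
    rw [← hdHuv] at harc
    linarith
  · -- degenerate case: S < θ²
    have h1 : 0 ≤ dH u v := by rw [hdHuv]; exact arcosh_nonneg hX1
    linarith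
end

section
/- Let ū and v̄ be two points on the boundary sphere of the Poincaré ball such that the hyperbolic geodesic joining them is at Euclidean distance β from the origin, and let φ = π − ∠ūOv̄. Then β = tan(φ/4), and consequently πβ ≤ φ ≤ 4β. -/
open Real InnerProductGeometry

lemma aux_beta (N R : ℝ) (hR : 0 < R) (hN0 : 0 ≤ N) (h : N^2 = 1+R^2) :
    R < N ∧ 1 < N ∧ N - R < 1 ∧ 1 + (N-R)^2 = 2*N*(N-R) := by
  have h1 : R < N := by nlinarith
  have h2 : 1 < N := by nlinarith
  have h3 : N - R < 1 := by nlinarith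
  exact ⟨h1, h2, h3, by nlinarith⟩

lemma aux_arctan_bounds (β : ℝ) (h0 : 0 < β) (h1 : β < 1) :
    Real.pi * β ≤ 4 * Real.arctan β ∧ Real.arctan β ≤ β := by
  constructor
  · have hconc : ConcaveOn ℝ (Set.Icc (0:ℝ) 1) Real.arctan := by
      apply AntitoneOn.concaveOn_of_deriv (convex_Icc 0 1)
        (Real.continuous_arctan.continuousOn)
        (fun x _ => (Real.differentiableAt_arctan x).differentiableWithinAt)
      intro x hx y hy hxy
      rw [Real.deriv_arctan]
      simp only [interior_Icc, Set.mem_Ioo] at hx hy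
      apply one_div_le_one_div_of_le (by positivity)
      nlinarith [hx.1]
    have hcc := hconc.2 (Set.left_mem_Icc.mpr zero_le_one) (Set.right_mem_Icc.mpr zero_le_one)
      (by linarith : (0:ℝ) ≤ 1 - β) (le_of_lt h0) (by ring)
    simp only [smul_eq_mul, mul_zero, mul_one, zero_add, Real.arctan_zero,
      Real.arctan_one] at hcc
    linarith
  · have hψpos : 0 < Real.arctan β := by
      have := Real.arctan_strictMono h0
      rwa [Real.arctan_zero] at this
    have hle : Real.arctan β ≤ Real.tan (Real.arctan β) :=
      Real.le_tan (le_of_lt hψpos) (Real.arctan_lt_pi_div_two β)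
    rwa [Real.tan_arctan] at hle

/-- Two boundary points of the Poincaré disk joined by a circular arc (center `c`,
radius `R`) orthogonal to the unit circle, with `β` the Euclidean distance from the
origin to the arc and `φ = π - ∠ ū O v̄`: then `β = tan (φ/4)`, hence `πβ ≤ φ ≤ 4β`. -/
theorem boundary_geodesic_angle (ubar vbar c : EuclideanSpace ℝ (Fin 2)) (R β φ : ℝ)
    (hub : ‖ubar‖ = 1) (hvb : ‖vbar‖ = 1) (hne : ubar ≠ vbar)
    (hR : 0 < R) (huc : ‖ubar - c‖ = R) (hvc : ‖vbar - c‖ = R)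
    (horth : ‖c‖ ^ 2 = 1 + R ^ 2)
    (hβ : β = ‖c‖ - R)
    (hφ : φ = Real.pi - InnerProductGeometry.angle ubar vbar) :
    β = Real.tan (φ / 4) ∧ Real.pi * β ≤ φ ∧ φ ≤ 4 * β := by
  have nsq : ∀ x : EuclideanSpace ℝ (Fin 2), ‖x‖^2 = x 0^2 + x 1^2 := by
    intro x
    rw [← real_inner_self_eq_norm_sq]
    simp only [PiLp.inner_apply, Fin.sum_univ_two, RCLike.inner_apply, conj_trivial]
    ring
  set u0 := ubar 0 with hu0; set u1 := ubar 1 with hu1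
  set v0 := vbar 0 with hv0; set v1 := vbar 1 with hv1
  set c0 := c 0 with hc0; set c1 := c 1 with hc1
  have h1 : u0^2 + u1^2 = 1 := by have := nsq ubar; rw [hub] at this; linarith
  have h2 : v0^2 + v1^2 = 1 := by have := nsq vbar; rw [hvb] at this; linarith
  have h3 : (u0-c0)^2 + (u1-c1)^2 = R^2 := by
    have := nsq (ubar - c); rw [huc] at this; simpa using this.symm
  have h4 : (v0-c0)^2 + (v1-c1)^2 = R^2 := by
    have := nsq (vbar - c); rw [hvc] at this; simpa using this.symm
  have h5 : c0^2 + c1^2 = 1 + R^2 := by have := nsq c; rw [horth] at this; linarith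
  have huc1 : u0*c0 + u1*c1 = 1 := by linear_combination (h1 + h5 - h3)/2
  have hvc1 : v0*c0 + v1*c1 = 1 := by linear_combination (h2 + h5 - h4)/2
  have hw : u0 ≠ v0 ∨ u1 ≠ v1 := by
    by_contra hc'
    push_neg at hc'
    exact hne (PiLp.ext fun i => by fin_cases i <;> simp [hu0, hu1, hv0, hv1] at * <;>
      simp [hc'.1, hc'.2])
  have hA : (u0+v0)*(u0-v0) + (u1+v1)*(u1-v1) = 0 := by linear_combination h1 - h2
  have hB : c0*(u0-v0) + c1*(u1-v1) = 0 := by linear_combination huc1 - hvc1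
  have hK : (u0+v0)*c1 - (u1+v1)*c0 = 0 := by
    rcases hw with h | h
    · apply mul_right_cancel₀ (sub_ne_zero.mpr h)
      rw [zero_mul]
      linear_combination c1 * hA - (u1+v1) * hB
    · apply mul_right_cancel₀ (sub_ne_zero.mpr h)
      rw [zero_mul]
      linear_combination -c0 * hA + (u0+v0) * hB
  set P := u0*v0 + u1*v1 with hPdef
  have hmain : (2 + 2*P) * (1+R^2) = 4 := by
    have lag : ((u0+v0)^2+(u1+v1)^2)*(c0^2+c1^2)
        = ((u0+v0)*c0+(u1+v1)*c1)^2 + ((u0+v0)*c1-(u1+v1)*c0)^2 := by ring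
    have e1 : (u0+v0)*c0+(u1+v1)*c1 = 2 := by linear_combination huc1 + hvc1
    have e2 : (u0+v0)^2+(u1+v1)^2 = 2 + 2*P := by linear_combination h1 + h2
    calc (2 + 2*P) * (1+R^2) = ((u0+v0)^2+(u1+v1)^2)*(c0^2+c1^2) := by rw [e2, h5]
      _ = ((u0+v0)*c0+(u1+v1)*c1)^2 + ((u0+v0)*c1-(u1+v1)*c0)^2 := lag
      _ = 4 := by rw [e1, hK]; norm_num
  have hP : P * (1+R^2) = 1 - R^2 := by linarith
  have hinner : (inner ℝ ubar vbar : ℝ) = P := by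
    simp [PiLp.inner_apply, Fin.sum_univ_two, hPdef]; ring
  have hcosθ : Real.cos (angle ubar vbar) = P := by
    rw [InnerProductGeometry.cos_angle, hub, hvb, hinner]; simp
  have hcosφ : Real.cos φ = -P := by rw [hφ, Real.cos_pi_sub, hcosθ]
  -- facts about β and ‖c‖
  obtain ⟨hNR, hN1, hβlt1, hb1'⟩ := aux_beta ‖c‖ R hR (norm_nonneg c) horth
  have hβpos : 0 < β := by rw [hβ]; linarith
  have hβ1 : β < 1 := by rw [hβ]; exact hβlt1
  have hb1 : 1 + β^2 = 2*‖c‖*β := by rw [hβ]; exact hb1'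
  have hsq : (1+β^2)^2 = 4*(1+R^2)*β^2 := by
    calc (1+β^2)^2 = (2*‖c‖*β)^2 := by rw [hb1]
      _ = 4*‖c‖^2*β^2 := by ring
      _ = 4*(1+R^2)*β^2 := by rw [horth]
  have key : Real.cos φ * (1+β^2)^2 = 1 - 6*β^2 + β^4 := by
    linear_combination (1+β^2)^2 * hcosφ + (-P-1) * hsq + (-4*β^2) * hP
  set ψ := Real.arctan β with hψ
  have hden : (0:ℝ) < 1 + β^2 := by positivity
  have hcsψ : Real.cos ψ ^ 2 = 1/(1+β^2) := by
    rw [hψ, Real.cos_arctan]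
    rw [div_pow, one_pow, Real.sq_sqrt (by positivity)]
  have hcφval : Real.cos φ = (1 - 6*β^2 + β^4)/(1+β^2)^2 := by
    rw [eq_div_iff (by positivity)]
    exact key
  have hcos4 : Real.cos (4*ψ) = Real.cos φ := by
    have e4 : (4:ℝ)*ψ = 2*(2*ψ) := by ring
    rw [e4, Real.cos_two_mul, Real.cos_two_mul, hcsψ, hcφval]
    field_simp
    ring
  have hθ1 := InnerProductGeometry.angle_nonneg ubar vbar
  have hθ2 := InnerProductGeometry.angle_le_pi ubar vbar
  have hφmem : φ ∈ Set.Icc 0 Real.pi := by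
    constructor <;> rw [hφ] <;> linarith
  have hψpos : 0 < ψ := by
    rw [hψ]
    have := Real.arctan_strictMono hβpos
    rwa [Real.arctan_zero] at this
  have hψlt : ψ < Real.pi/4 := by
    rw [hψ]
    have := Real.arctan_strictMono hβ1
    rwa [Real.arctan_one] at this
  have h4ψmem : 4*ψ ∈ Set.Icc 0 Real.pi := by
    constructor <;> linarith
  have hφeq : φ = 4*ψ := Real.injOn_cos hφmem h4ψmem hcos4.symm
  have htan : Real.tan (φ/4) = β := by
    rw [hφeq]
    have e : (4:ℝ)*ψ/4 = ψ := by ring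
    rw [e, hψ, Real.tan_arctan]
  obtain ⟨hlow, hup⟩ := aux_arctan_bounds β hβpos hβ1
  refine ⟨htan.symm, ?_, ?_⟩
  · rw [hφeq, hψ]; linarith
  · rw [hφeq, hψ]; linarith
end
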